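/- arXiv:1904.07055 — 2 statements merged into one kernel-verified Lean document; each statement's English description precedes it below -/
import Mathlib

section
/- For every n ≥ 0, N̄(1,3,n) = N̄(2,3,n). -/
namespace OP

/-- number of parts of `l` greater than `i` -/
def cf (l : List ℕ) (i : ℕ) : ℕ := l.countP (fun p => decide (i < p))

def conjParts (l : List ℕ) : List ℕ := (List.range l.headI).map (cf l)

/-- number of parts of `l` at least `p` -/
def mm (l : List ℕ) (p : ℕ) : ℕ := l.countP (fun q => decide (p ≤ q))

lemma mem_le_headI {l : List ℕ} (hs : l.Pairwise (· ≥ ·)) {a : ℕ} (ha : a ∈ l) :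
    a ≤ l.headI := by
  cases l with
  | nil => simp at ha
  | cons b t =>
    rcases List.mem_cons.1 ha with rfl | h
    · simp
    · exact (List.pairwise_cons.1 hs).1 a h

lemma cf_antitone (l : List ℕ) {i j : ℕ} (hij : i ≤ j) : cf l j ≤ cf l i :=
  List.countP_mono_left (fun x _ hx => by simp at hx ⊢; omega)

lemma lt_cf_iff {l : List ℕ} (hs : l.Pairwise (· ≥ ·)) {i : ℕ} (hi : i < l.length) (j : ℕ) :
    i < cf l j ↔ j < l.get ⟨i, hi⟩ := by
  induction l generalizing i with
  | nil => simp at hi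
  | cons a t ih =>
    by_cases hja : j < a
    · have hcf : cf (a :: t) j = cf t j + 1 := by simp [cf, List.countP_cons, hja]
      cases i with
      | zero => simpa [hcf] using hja
      | succ i =>
        have hi' : i < t.length := by simpa using hi
        rw [hcf]
        simpa using ih (List.pairwise_cons.1 hs).2 hi'
    · have hcf : cf (a :: t) j = 0 := by
        rw [cf, List.countP_eq_zero]
        intro x hx
        have : x ≤ a := mem_le_headI hs hx
        simp; omega
      have : (a :: t).get ⟨i, hi⟩ ≤ a := mem_le_headI hs (List.get_mem _ _)
      rw [hcf]
      constructor
      · omega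
      · intro h; omega

lemma mm_eq_cf_add_count (l : List ℕ) (p : ℕ) : mm l p = cf l p + l.count p := by
  induction l with
  | nil => simp [mm, cf]
  | cons a t ih =>
    simp only [mm, cf, List.countP_cons, List.count_cons] at *
    rcases lt_trichotomy a p with h | rfl | h
    · have h1 : ¬ (p ≤ a) := by omega
      have h2 : ¬ (p < a) := by omega
      simp [h1, h2, h.ne, ih]
    · simp [ih]; omega
    · have h1 : p ≤ a := h.le
      have h2 : p < a := h
      simp [h1, h2, Nat.ne_of_gt h, ih]; omega

lemma mm_eq_cf {l : List ℕ} {p : ℕ} (hp : 1 ≤ p) : mm l p = cf l (p - 1) := by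
  apply List.countP_congr
  intro x _; simp; omega

lemma countP_range (n c : ℕ) : (List.range n).countP (fun j => decide (j < c)) = min c n := by
  induction n with
  | zero => simp
  | succ n ih =>
    rw [List.range_succ, List.countP_append, ih]
    by_cases h : n < c <;> simp [h] <;> omega

lemma sum_range_cf {l : List ℕ} (h : ℕ) (hle : ∀ p ∈ l, p ≤ h) :
    ((List.range h).map (cf l)).sum = l.sum := by
  induction l with
  | nil =>
    rw [List.sum_nil]
    apply List.sum_eq_zero
    intro x hx
    rw [List.mem_map] at hx
    obtain ⟨i, _, rfl⟩ := hx
    simp [cf]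
  | cons a t ih =>
    have hat : ∀ p ∈ t, p ≤ h := fun p hp => hle p (List.mem_cons_of_mem a hp)
    have key : ∀ i, cf (a :: t) i = cf t i + (if i < a then 1 else 0) := by
      intro i; simp [cf, List.countP_cons]
    have hsum : ((List.range h).map (cf (a :: t))).sum
        = ((List.range h).map (cf t)).sum + ((List.range h).map (fun i => if i < a then 1 else 0)).sum := by
      rw [show (cf (a :: t)) = fun i => cf t i + (if i < a then 1 else 0) from funext key]
      exact List.sum_map_add
    have hcount : ((List.range h).map (fun i => if i < a then 1 else 0)).sum = a := by
      have : ((List.range h).map (fun i => if i < a then 1 else 0)).sum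
          = (List.range h).countP (fun j => decide (j < a)) := by
        induction (List.range h) with
        | nil => simp
        | cons x xs ihh =>
          rw [List.map_cons, List.sum_cons, List.countP_cons, ihh]
          by_cases hx : x < a <;> simp [hx] <;> omega
      rw [this, countP_range]
      have := hle a (List.mem_cons_self)
      omega
    rw [hsum, ih hat, hcount, List.sum_cons]; omega

lemma conjParts_length (l : List ℕ) : (conjParts l).length = l.headI := by
  simp [conjParts]

lemma headI_pos_of_ne_nil {l : List ℕ} (hp : ∀ p ∈ l, 0 < p) (hne : l ≠ []) :
    0 < l.headI := by
  cases l with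
  | nil => simp at hne
  | cons a t => exact hp a (List.mem_cons_self)

lemma conjParts_headI {l : List ℕ} (hp : ∀ p ∈ l, 0 < p) :
    (conjParts l).headI = l.length := by
  rcases eq_or_ne l [] with rfl | hne
  · simp [conjParts, cf]
  · obtain ⟨h', hh⟩ : ∃ h', l.headI = h' + 1 :=
      ⟨l.headI - 1, by have := headI_pos_of_ne_nil hp hne; omega⟩
    rw [conjParts, hh, List.range_succ_eq_map]
    simp only [List.map_cons, List.headI_cons]
    rw [cf, List.countP_eq_length]
    intro a ha
    have := hp a ha
    simp; omega

lemma conjParts_sorted {l : List ℕ} : (conjParts l).Pairwise (· ≥ ·) := by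
  rw [conjParts, List.pairwise_map]
  exact (List.pairwise_lt_range (n := _)).imp (fun hab => cf_antitone l hab.le)

lemma conjParts_pos {l : List ℕ} (hp : ∀ p ∈ l, 0 < p) :
    ∀ q ∈ conjParts l, 0 < q := by
  intro q hq
  rw [conjParts, List.mem_map] at hq
  obtain ⟨j, hj, rfl⟩ := hq
  rw [List.mem_range] at hj
  have hne : l ≠ [] := by
    intro h; rw [h] at hj; simp at hj
  rw [cf, List.countP_pos_iff]
  refine ⟨l.headI, ?_, by simp; omega⟩
  cases l with
  | nil => simp at hne
  | cons a t => exact List.mem_cons_self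

lemma conjParts_sum {l : List ℕ} (hs : l.Pairwise (· ≥ ·)) : (conjParts l).sum = l.sum :=
  sum_range_cf l.headI (fun p hp => mem_le_headI hs hp)

lemma get_conjParts {l : List ℕ} {i : ℕ} (hi : i < (conjParts l).length) :
    (conjParts l).get ⟨i, hi⟩ = cf l i := by
  simp [conjParts]

lemma conjParts_conjParts {l : List ℕ} (hs : l.Pairwise (· ≥ ·)) (hp : ∀ p ∈ l, 0 < p) :
    conjParts (conjParts l) = l := by
  have hlen : (conjParts (conjParts l)).length = l.length := by
    rw [conjParts_length, conjParts_headI hp]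
  apply List.ext_get hlen
  intro i h1 h2
  rw [get_conjParts]
  -- cf (conjParts l) i = countP (fun j => i < cf l j) (range l.headI)
  rw [cf, conjParts, List.countP_map]
  have hi : i < l.length := h2
  have hcong : ∀ j ∈ List.range l.headI,
      ((fun p => decide (i < p)) ∘ cf l) j = decide (j < l.get ⟨i, hi⟩) := by
    intro j _
    simp only [Function.comp]
    simp [lt_cf_iff hs hi j]
  rw [List.countP_congr (fun x hx => by rw [hcong x hx]), countP_range]
  have : l.get ⟨i, hi⟩ ≤ l.headI := mem_le_headI hs (List.get_mem _ _)
  omega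

lemma mm_mem_conjParts {l : List ℕ} (hs : l.Pairwise (· ≥ ·)) (hp : ∀ p ∈ l, 0 < p)
    {p : ℕ} (hpl : p ∈ l) : mm l p ∈ conjParts l := by
  have h1 : 1 ≤ p := hp p hpl
  have h2 : p ≤ l.headI := mem_le_headI hs hpl
  rw [conjParts, List.mem_map]
  exact ⟨p - 1, List.mem_range.2 (by omega), (mm_eq_cf h1).symm⟩

lemma mm_mm {l : List ℕ} (hs : l.Pairwise (· ≥ ·)) (hp : ∀ p ∈ l, 0 < p)
    {p : ℕ} (hpl : p ∈ l) : mm (conjParts l) (mm l p) = p := by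
  have h1 : 1 ≤ p := hp p hpl
  have h2 : p ≤ l.headI := mem_le_headI hs hpl
  have hv : mm l p = cf l (p - 1) := mm_eq_cf h1
  have hcountp : 1 ≤ l.count p := List.count_pos_iff.2 hpl
  have hlt : cf l p < cf l (p - 1) := by
    have := mm_eq_cf_add_count l p
    have hle : cf l p ≤ mm l p := List.countP_mono_left (fun x _ hx => by simp at hx ⊢; omega)
    omega
  rw [mm, conjParts, List.countP_map]
  have hcong : ∀ j ∈ List.range l.headI,
      ((fun q => decide (mm l p ≤ q)) ∘ cf l) j = decide (j < p) := by
    intro j _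
    simp only [Function.comp]
    simp only [decide_eq_decide]
    constructor
    · intro hj
      by_contra hc
      push_neg at hc
      have : cf l j ≤ cf l p := cf_antitone l hc
      omega
    · intro hj
      have : cf l (p-1) ≤ cf l j := cf_antitone l (by omega)
      omega
  rw [List.countP_congr (fun x hx => by rw [hcong x hx]), countP_range]
  omega

end OP

open Complex Real MeasureTheory OP

structure Overpartition (n : ℕ) where
  parts : List ℕ
  overlined : Finset ℕ
  pos : ∀ p ∈ parts, 0 < p
  sorted : parts.Pairwise (· ≥ ·)
  parts_sum : parts.sum = n
  overlined_sub : overlined ⊆ parts.toFinset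

def Overpartition.rank {n : ℕ} (O : Overpartition n) : ℤ :=
  (O.parts.headI : ℤ) - O.parts.length

noncomputable def obar (n : ℕ) : ℕ := Nat.card (Overpartition n)

noncomputable def Nbar (m : ℤ) (n : ℕ) : ℕ :=
  Nat.card {O : Overpartition n // O.rank = m}

noncomputable def NbarMod (a : ℤ) (c : ℕ) (n : ℕ) : ℕ :=
  Nat.card {O : Overpartition n // O.rank ≡ a [ZMOD (c : ℤ)]}

namespace OP

lemma Overpartition.ext' {n : ℕ} {O₁ O₂ : Overpartition n}
    (h1 : O₁.parts = O₂.parts) (h2 : O₁.overlined = O₂.overlined) : O₁ = O₂ := by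
  cases O₁; cases O₂
  simp only at h1 h2
  subst h1; subst h2
  rfl

def conjO {n : ℕ} (O : Overpartition n) : Overpartition n where
  parts := conjParts O.parts
  overlined := O.overlined.image (mm O.parts)
  pos := conjParts_pos O.pos
  sorted := conjParts_sorted
  parts_sum := by rw [conjParts_sum O.sorted, O.parts_sum]
  overlined_sub := by
    intro q hq
    rw [Finset.mem_image] at hq
    obtain ⟨p, hp, rfl⟩ := hq
    have hpl : p ∈ O.parts := List.mem_toFinset.1 (O.overlined_sub hp)
    exact List.mem_toFinset.2 (mm_mem_conjParts O.sorted O.pos hpl)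

lemma conjO_conjO {n : ℕ} (O : Overpartition n) : conjO (conjO O) = O := by
  apply Overpartition.ext'
  · exact conjParts_conjParts O.sorted O.pos
  · show (O.overlined.image (mm O.parts)).image (mm (conjParts O.parts)) = O.overlined
    rw [Finset.image_image]
    have : ∀ p ∈ O.overlined, (mm (conjParts O.parts) ∘ mm O.parts) p = p := by
      intro p hp
      exact mm_mm O.sorted O.pos (List.mem_toFinset.1 (O.overlined_sub hp))
    calc (O.overlined).image (mm (conjParts O.parts) ∘ mm O.parts)
        = O.overlined.image id := Finset.image_congr (fun p hp => this p hp)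
      _ = O.overlined := Finset.image_id

lemma rank_conjO {n : ℕ} (O : Overpartition n) : (conjO O).rank = - O.rank := by
  show ((conjParts O.parts).headI : ℤ) - (conjParts O.parts).length
      = -(((O.parts.headI : ℤ)) - O.parts.length)
  rw [conjParts_headI O.pos, conjParts_length]
  ring

end OP

theorem NbarMod_one_three (n : ℕ) : NbarMod 1 3 n = NbarMod 2 3 n := by
  unfold NbarMod
  apply Nat.card_congr
  refine ⟨fun O => ⟨conjO O.1, ?_⟩, fun O => ⟨conjO O.1, ?_⟩, ?_, ?_⟩
  · have h := O.2
    rw [rank_conjO]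
    simp only [Int.ModEq] at h ⊢
    omega
  · have h := O.2
    rw [rank_conjO]
    simp only [Int.ModEq] at h ⊢
    omega
  · intro O
    exact Subtype.ext (conjO_conjO O.1)
  · intro O
    exact Subtype.ext (conjO_conjO O.1)
end

section
/- With the notation above, if c₁ = c (i.e., gcd(c,k) = 1) and c ≥ 3, then for all integers r ≥ 0, δ_{c,k,r} ≤ 1/16 − (c−2)/(2c²), and in particular δ_{c,k,r} < 1/16. -/
open Complex Real MeasureTheory

/-- The quantity δ_{c,k,r}, as a function of ℓ, c₁ and r. -/
def deltaQ (ℓ c₁ r : ℕ) : ℚ :=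
  if ℓ = 0 then 0
  else if (ℓ : ℚ) / c₁ ≤ 1 / 4 then
    1 / 16 - ℓ / (2 * c₁) + ℓ ^ 2 / c₁ ^ 2 - r * ℓ / c₁
  else if (ℓ : ℚ) / c₁ ≤ 3 / 4 then 0
  else 1 / 16 - 3 * ℓ / (2 * c₁) + ℓ ^ 2 / c₁ ^ 2 + 1 / 2 - r * (1 - ℓ / c₁)

theorem deltaQ_lt (a c k r : ℕ) (ha : 0 < a) (hac : a < c) (hcop : Nat.Coprime a c)
    (hk : 0 < k) (hck : ¬ (c ∣ k)) (hgcd : Nat.gcd c k = 1) (hc : 3 ≤ c)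
    (ℓ : ℕ) (hℓ : ℓ < c) (hcong : ℓ ≡ a * k [MOD c]) :
    deltaQ ℓ c r ≤ 1 / 16 - ((c : ℚ) - 2) / (2 * (c : ℚ) ^ 2) ∧
      deltaQ ℓ c r < 1 / 16 := by
  have hc0 : (0:ℚ) < c := by positivity
  have hc3 : (3:ℚ) ≤ c := by exact_mod_cast hc
  have hL1 : (ℓ:ℚ) + 1 ≤ c := by exact_mod_cast hℓ
  have hr0 : (0:ℚ) ≤ r := by positivity
  have hmid : ((c:ℚ) - 2) / (2 * c ^ 2) ≤ 1 / 16 := by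
    rw [div_le_iff₀ (by positivity)]
    nlinarith [sq_nonneg ((c:ℚ) - 4)]
  have hpos : 0 < ((c:ℚ) - 2) / (2 * c ^ 2) := by
    apply div_pos (by linarith) (by positivity)
  have hrhs : 1 / 16 - ((c : ℚ) - 2) / (2 * (c : ℚ) ^ 2)
      = ((c:ℚ)^2 - 8*c + 16) / (16 * c^2) := by field_simp; ring
  have main : deltaQ ℓ c r ≤ 1 / 16 - ((c : ℚ) - 2) / (2 * (c : ℚ) ^ 2) := by
    unfold deltaQ
    split_ifs with h0 h1 h2
    · linarith
    · have hL : (1:ℚ) ≤ ℓ := by exact_mod_cast Nat.one_le_iff_ne_zero.mpr h0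
      rw [div_le_div_iff₀ hc0 (by norm_num)] at h1
      rw [hrhs, show (1:ℚ) / 16 - ℓ / (2 * c) + ℓ ^ 2 / c ^ 2 - r * ℓ / c
          = ((c:ℚ)^2 - 8*ℓ*c + 16*ℓ^2 - 16*r*ℓ*c) / (16 * c^2) from by field_simp; ring]
      gcongr ?_ / _
      nlinarith [mul_nonneg (by linarith : (0:ℚ) ≤ (ℓ:ℚ) - 1)
          (by linarith : (0:ℚ) ≤ (c:ℚ) - 2*ℓ - 2),
        mul_nonneg (mul_nonneg hr0 (by linarith : (0:ℚ) ≤ (ℓ:ℚ))) hc0.le]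
    · linarith
    · have hL : (1:ℚ) ≤ ℓ := by exact_mod_cast Nat.one_le_iff_ne_zero.mpr h0
      rw [div_le_div_iff₀ hc0 (by norm_num), not_le] at h2
      rw [hrhs, show (1:ℚ) / 16 - 3 * ℓ / (2 * c) + ℓ ^ 2 / c ^ 2 + 1 / 2 - r * (1 - ℓ / c)
          = (9*(c:ℚ)^2 - 24*ℓ*c + 16*ℓ^2 - 16*r*c*(c - ℓ)) / (16 * c^2) from by field_simp; ring]
      gcongr ?_ / _
      nlinarith [mul_nonneg (by linarith : (0:ℚ) ≤ (c:ℚ) - ℓ - 1)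
          (by linarith : (0:ℚ) ≤ 2*(ℓ:ℚ) - c - 2),
        mul_nonneg (mul_nonneg hr0 hc0.le) (by linarith : (0:ℚ) ≤ (c:ℚ) - ℓ)]
  exact ⟨main, by linarith⟩
end
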